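/- Let a > 0, η ∈ (2/3, 1), p > 1, and t ≥ 0, and define R_p(z) := a/(z − p) + (p − p^η)/(z − ip) + (p − p^η)/(z + ip). Then R_p(p + pt) is real and R_p(p + pt) ≥ 1 if and only if p·t³ + (2p^η − a)·t² + 2(p^η − a)·t ≤ 2a. Moreover, there exists p_0 = p_0(a, η) such that for all p > p_0, the set {z ∈ ℂ : |R_p(z)| ≥ 1} contains the real interval [p, p + a·p^{1−η}/2]. -/

import Mathlib

open MeasureTheory Metric Complex Set Topology Filter OnePoint
open scoped Classical

noncomputable section

/-- The Riemann sphere, modeled as the one-point compactification of `ℂ`. -/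
abbrev RS : Type := OnePoint ℂ

instance : MeasurableSpace RS := borel RS
instance : BorelSpace RS := ⟨rfl⟩

/-- The finite part of a point of the Riemann sphere (junk value `0` at `∞`). -/
def sphToC (z : RS) : ℂ := if h : ∃ x : ℂ, (x : RS) = z then h.choose else 0

/-- The inversion `z ↦ 1/z` on the Riemann sphere. -/
def sphInv (z : RS) : RS :=
  if z = (∞ : RS) then ((0 : ℂ) : RS)
  else if sphToC z = 0 then (∞ : RS) else (((sphToC z)⁻¹ : ℂ) : RS)

/-- Mean-value-property definition of harmonicity on a planar set. -/
def HarmonicOnC (h : ℂ → ℝ) (D : Set ℂ) : Prop :=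
  ContinuousOn h D ∧ ∀ z ∈ D, ∀ r : ℝ, 0 < r → closedBall z r ⊆ D →
    h z = (2 * Real.pi)⁻¹ *
      ∫ θ in (0:ℝ)..(2 * Real.pi), h (z + (r : ℂ) * Complex.exp ((θ : ℂ) * Complex.I))

/-- Harmonicity on a subset of the Riemann sphere, via the two standard charts. -/
def HarmonicOnS (h : RS → ℝ) (D : Set RS) : Prop :=
  HarmonicOnC (fun x : ℂ => h (x : RS)) {x : ℂ | (x : RS) ∈ D} ∧
  HarmonicOnC (fun x : ℂ => h (sphInv (x : RS))) {x : ℂ | sphInv (x : RS) ∈ D}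

/-- `ω` is the harmonic measure of `D ⊆ Ĉ` at `a` (for disconnected `D`, the harmonic
measure of the component of `D` containing `a`). -/
def IsHarmonicMeasureS (D : Set RS) (a : RS) (ω : Measure RS) : Prop :=
  a ∈ D ∧ IsProbabilityMeasure ω ∧ ω ((frontier D)ᶜ) = 0 ∧
  ∀ h : RS → ℝ, HarmonicOnS h D → ContinuousOn h (closure D) →
    ∫ x, h x ∂ω = h a

/-- `ω` is the harmonic measure of the planar domain `D` at `a`. -/
def IsHarmonicMeasureC (D : Set ℂ) (a : ℂ) (ω : Measure ℂ) : Prop :=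
  a ∈ D ∧ IsProbabilityMeasure ω ∧ ω ((frontier D)ᶜ) = 0 ∧
  ∀ h : ℂ → ℝ, HarmonicOnC h D → ContinuousOn h (closure D) →
    ∫ x, h x ∂ω = h a

/-- The logarithmic kernel `log (1/|z-w|)`. -/
def logKer (z w : ℂ) : ℝ := Real.log (1 / dist z w)

/-- Mutual logarithmic energy `∬ log (1/|z-w|) dμ(z) dν(w)` as an extended real number. -/
def mutualEnergy (μ ν : Measure ℂ) : EReal :=
  ENNReal.toEReal (∫⁻ q : ℂ × ℂ, ENNReal.ofReal (logKer q.1 q.2) ∂(μ.prod ν)) -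
  ENNReal.toEReal (∫⁻ q : ℂ × ℂ, ENNReal.ofReal (-(logKer q.1 q.2)) ∂(μ.prod ν))

/-- Logarithmic energy of a measure. -/
def energyI (μ : Measure ℂ) : EReal := mutualEnergy μ μ

/-- Equilibrium energy of a set: infimum of the energies of Borel probability
measures supported on it. -/
def eqEnergy (K : Set ℂ) : EReal :=
  ⨅ (μ : Measure ℂ) (_ : IsProbabilityMeasure μ) (_ : μ Kᶜ = 0), energyI μ

/-- Logarithmic capacity `cap K = e^{-I(K)}`. -/
def logCap (K : Set ℂ) : ℝ :=
  if eqEnergy K = ⊤ then 0 else Real.exp (-(eqEnergy K).toReal)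

/-- The rational function `z ↦ ∑ i, a i / (z - p i)`. -/
def ratSum {d : ℕ} (a p : Fin d → ℂ) (z : ℂ) : ℂ := ∑ i, a i / (z - p i)

/-- Riemann-sphere-valued evaluation of `ratSum` (value `∞` at the poles). -/
def ratSumS {d : ℕ} (a p : Fin d → ℂ) (z : ℂ) : RS :=
  if z ∈ Set.range p then (∞ : RS) else ((ratSum a p z : ℂ) : RS)

/-- The lemniscate `{z ∈ ℂ : |R(z)| ≥ t}` of `R = ∑ a i / (z - p i)`;
the poles belong to it. -/
def lemniscate {d : ℕ} (a p : Fin d → ℂ) (t : ℝ) : Set ℂ :=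
  {z : ℂ | z ∈ Set.range p ∨ t ≤ ‖ratSum a p z‖}

/-- `Ω = R⁻¹(𝔻) ⊆ Ĉ` for `R = ∑ a i / (z - p i)` (it contains `∞` since `R(∞)=0`). -/
def ratSumDomain {d : ℕ} (a p : Fin d → ℂ) : Set RS :=
  {(∞ : RS)} ∪ (fun x : ℂ => (x : RS)) ''
    {z : ℂ | z ∉ Set.range p ∧ ‖ratSum a p z‖ < 1}

/-- An analytic Jordan curve: the image of the unit circle under an injective
analytic map with non-vanishing derivative, defined near the circle. -/
def IsAnalyticJordanCurve (J : Set ℂ) : Prop :=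
  ∃ (U : Set ℂ) (f : ℂ → ℂ), IsOpen U ∧ sphere (0:ℂ) 1 ⊆ U ∧ AnalyticOnNhd ℂ f U ∧
    Set.InjOn f (sphere (0:ℂ) 1) ∧ (∀ z ∈ sphere (0:ℂ) 1, deriv f z ≠ 0) ∧
    f '' sphere (0:ℂ) 1 = J

/-- A (topological) Jordan curve. -/
def IsJordanCurve (J : Set ℂ) : Prop :=
  ∃ f : ℂ → ℂ, ContinuousOn f (sphere (0:ℂ) 1) ∧ Set.InjOn f (sphere (0:ℂ) 1) ∧
    f '' sphere (0:ℂ) 1 = J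

/-- A bounded Jordan domain. -/
def IsJordanDomain (D : Set ℂ) : Prop :=
  IsOpen D ∧ IsConnected D ∧ Bornology.IsBounded D ∧ IsJordanCurve (frontier D)

/-- `R = ∑ a i / (z - p i)` is a `d`-good rational function: it has degree `d`
(the residues are nonzero and the poles are distinct), `R(∞) = 0`, and
`Ω = R⁻¹(𝔻)` is connected and bounded by `d` disjoint analytic Jordan curves,
the `i`-th of which surrounds the pole `p i`. -/
structure IsGoodRat (d : ℕ) (a p : Fin d → ℂ) : Prop where
  residue_ne : ∀ i, a i ≠ 0
  poles_inj : Function.Injective p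
  conn : IsConnected (ratSumDomain a p)
  curves : ∃ γ : Fin d → Set ℂ, (∀ i, IsAnalyticJordanCurve (γ i)) ∧
    (Pairwise fun i j => Disjoint (γ i) (γ j)) ∧
    frontier (ratSumDomain a p) = (fun x : ℂ => (x : RS)) '' ⋃ i, γ i ∧
    ∀ i, p i ∉ γ i ∧ Bornology.IsBounded (connectedComponentIn ((γ i)ᶜ) (p i))

/-- Evaluation of the rational function `P/Q` on the Riemann sphere. -/
def ratEval (P Q : Polynomial ℂ) : RS → RS := fun z =>
  if z = (∞ : RS) then
    (if Q.natDegree < P.natDegree then (∞ : RS)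
     else ((P.coeff Q.natDegree / Q.leadingCoeff : ℂ) : RS))
  else
    (if Q.eval (sphToC z) = 0 then (∞ : RS)
     else ((P.eval (sphToC z) / Q.eval (sphToC z) : ℂ) : RS))

/-- `g` has a zero of exact order `m` at `x`. -/
def HasZeroOrderAt (g : ℂ → ℂ) (x : ℂ) (m : ℕ) : Prop :=
  ∃ c : ℂ, c ≠ 0 ∧ Filter.Tendsto (fun y : ℂ => g y / (y - x) ^ m) (𝓝[≠] x) (𝓝 c)

/-- `f : Ĉ → ℂ` has a zero of exact order `m` at `z ∈ Ĉ`. -/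
def ZeroOrderAtS (f : RS → ℂ) (z : RS) (m : ℕ) : Prop :=
  (z = (∞ : RS) → HasZeroOrderAt (fun x : ℂ => f (sphInv (x : RS))) 0 m) ∧
  ∀ x : ℂ, z = (x : RS) → HasZeroOrderAt (fun y : ℂ => f (y : RS)) x m

/-- Holomorphy on a subset of the Riemann sphere (in both charts). -/
def HolomorphicOnS (f : RS → ℂ) (D : Set RS) : Prop :=
  DifferentiableOn ℂ (fun x : ℂ => f (x : RS)) {x : ℂ | (x : RS) ∈ D} ∧
  DifferentiableOn ℂ (fun x : ℂ => f (sphInv (x : RS))) {x : ℂ | sphInv (x : RS) ∈ D}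

/-- `f` is a proper map from `D` into the open unit disc. -/
def IsProperToDisc (f : RS → ℂ) (D : Set RS) : Prop :=
  Set.MapsTo f D (ball (0:ℂ) 1) ∧
  ∀ L : Set ℂ, L ⊆ ball (0:ℂ) 1 → IsCompact L → IsCompact {z ∈ D | f z ∈ L}

/-- `G` is the Green function of `D ⊆ Ĉ` with pole at `∞` (extended by `0` off `D`):
it is positive and harmonic on `D ∖ {∞}`, `G(z) - log|z|` has a finite limit at `∞`,
and `G` tends to `0` at every boundary point. -/
def IsGreenPoleInf (D : Set RS) (G : RS → ℝ) : Prop :=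
  (∞ : RS) ∈ D ∧
  HarmonicOnS G (D \ {(∞ : RS)}) ∧
  (∀ z ∈ D, z ≠ (∞ : RS) → 0 < G z) ∧
  (∀ z ∉ D, G z = 0) ∧
  (∀ w ∈ frontier D, Filter.Tendsto G (𝓝[D] w) (𝓝 0)) ∧
  ∃ L : ℝ, Filter.Tendsto (fun x : ℂ => G (x : RS) - Real.log ‖x‖)
    (Bornology.cobounded ℂ) (𝓝 L)

end
noncomputable section

/-- The residues of the rational function `R_p` of the counterexample. -/
def aVec (a η p : ℝ) : Fin 3 → ℂ :=
  ![(a : ℂ), ((p - p ^ η : ℝ) : ℂ), ((p - p ^ η : ℝ) : ℂ)]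

/-- The poles `p`, `ip`, `-ip` of the rational function `R_p` of the counterexample. -/
def pVec (p : ℝ) : Fin 3 → ℂ :=
  ![(p : ℂ), (p : ℂ) * Complex.I, -((p : ℂ) * Complex.I)]

/-- `R_p(z) = a/(z-p) + (p-p^η)/(z-ip) + (p-p^η)/(z+ip)`. -/
def Rpfun (a η p : ℝ) (z : ℂ) : ℂ :=
  (a : ℂ) / (z - (p : ℂ)) + ((p - p ^ η : ℝ) : ℂ) / (z - (p : ℂ) * Complex.I)
    + ((p - p ^ η : ℝ) : ℂ) / (z + (p : ℂ) * Complex.I)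

end


lemma pair_sum' (s : ℝ) : (1:ℂ)/((s:ℂ) - Complex.I) + 1/((s:ℂ) + Complex.I)
    = ((2*s/(s^2+1) : ℝ) : ℂ) := by
  have h1 : (s:ℂ) - Complex.I ≠ 0 := by
    intro h; have := congrArg Complex.im h; simp at this
  have h2 : (s:ℂ) + Complex.I ≠ 0 := by
    intro h; have := congrArg Complex.im h; simp at this
  have hs2 : ((s:ℂ)^2 + 1) ≠ 0 := by
    have h : ((s:ℂ)^2 + 1) = ((s^2+1 : ℝ) : ℂ) := by push_cast; ring
    rw [h]
    exact_mod_cast (by positivity : (s^2+1:ℝ) ≠ 0)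
  have hprod : ((s:ℂ) - Complex.I) * ((s:ℂ) + Complex.I) = (s:ℂ)^2 + 1 := by
    linear_combination (-1 : ℂ) * Complex.I_sq
  rw [div_add_div _ _ h1 h2, hprod]
  push_cast
  rw [div_eq_div_iff hs2 (by exact_mod_cast hs2)]
  ring

lemma Rpfun_val' (a η p t : ℝ) (hp : 0 < p) (ht : 0 < t) :
    Rpfun a η p ((p:ℂ) + (p:ℂ)*(t:ℂ)) =
      ((a/(p*t) + 2*(p - p^η)*(1+t)/(p*((1+t)^2+1)) : ℝ) : ℂ) := by
  have hpC : (p:ℂ) ≠ 0 := by exact_mod_cast hp.ne'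
  have hptR : p*t ≠ 0 := by positivity
  have hw1 : ((1+t:ℝ):ℂ) - Complex.I ≠ 0 := by
    intro h; have := congrArg Complex.im h; simp at this
  have hw2 : ((1+t:ℝ):ℂ) + Complex.I ≠ 0 := by
    intro h; have := congrArg Complex.im h; simp at this
  have hz1 : ((p:ℂ) + (p:ℂ)*(t:ℂ)) - p = ((p*t : ℝ):ℂ) := by push_cast; ring
  have hz2 : ((p:ℂ) + (p:ℂ)*(t:ℂ)) - (p:ℂ)*Complex.I
      = (p:ℂ) * (((1+t:ℝ):ℂ) - Complex.I) := by push_cast; ring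
  have hz3 : ((p:ℂ) + (p:ℂ)*(t:ℂ)) + (p:ℂ)*Complex.I
      = (p:ℂ) * (((1+t:ℝ):ℂ) + Complex.I) := by push_cast; ring
  unfold Rpfun
  rw [hz1, hz2, hz3]
  have hsplit : ((p - p^η : ℝ):ℂ)/((p:ℂ) * (((1+t:ℝ):ℂ) - Complex.I))
      + ((p - p^η : ℝ):ℂ)/((p:ℂ) * (((1+t:ℝ):ℂ) + Complex.I))
      = (((p - p^η)/p : ℝ):ℂ) * ((1:ℂ)/(((1+t:ℝ):ℂ) - Complex.I)
        + 1/(((1+t:ℝ):ℂ) + Complex.I)) := by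
    have hw1' : (1:ℂ) + (t:ℂ) - Complex.I ≠ 0 := by
      intro h; have := congrArg Complex.im h; simp at this
    have hw2' : (1:ℂ) + (t:ℂ) + Complex.I ≠ 0 := by
      intro h; have := congrArg Complex.im h; simp at this
    rw [Complex.ofReal_div]
    field_simp
  rw [add_assoc, hsplit, pair_sum' (1+t)]
  have hreal : a/(p*t) + 2*(p - p^η)*(1+t)/(p*((1+t)^2+1))
      = a/(p*t) + (p - p^η)/p * (2*(1+t)/((1+t)^2+1)) := by
    have h2 : p*((1+t)^2+1) ≠ 0 := by positivity
    field_simp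
  rw [hreal]
  push_cast
  ring

lemma cubic_iff' (a η p t : ℝ) (hp : 0 < p) (ht : 0 < t) :
    (1 ≤ a/(p*t) + 2*(p - p^η)*(1+t)/(p*((1+t)^2+1)) ↔
      p * t ^ 3 + (2 * p ^ η - a) * t ^ 2 + 2 * (p ^ η - a) * t ≤ 2 * a) := by
  have hD : 0 < p*t*((1+t)^2+1) := by positivity
  have hpt : p*t ≠ 0 := by positivity
  have hp2 : p*((1+t)^2+1) ≠ 0 := by positivity
  have hrw : a/(p*t) + 2*(p - p^η)*(1+t)/(p*((1+t)^2+1))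
      = 1 + (2*a - (p*t^3 + (2*p^η - a)*t^2 + 2*(p^η - a)*t))/(p*t*((1+t)^2+1)) := by
    field_simp
    ring
  rw [hrw, le_add_iff_nonneg_right, le_div_iff₀ hD, zero_mul, sub_nonneg]

lemma ratSum_eq' (a η p : ℝ) (z : ℂ) : ratSum (aVec a η p) (pVec p) z = Rpfun a η p z := by
  simp [ratSum, aVec, pVec, Rpfun, Fin.sum_univ_three, sub_neg_eq_add]

/-- For `a > 0`, `η ∈ (2/3, 1)`, `p > 1` and `t > 0`, the value
`R_p(p + pt)` is real, and `R_p(p + pt) ≥ 1` if and only if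
`p t³ + (2p^η - a) t² + 2(p^η - a) t ≤ 2a`. Moreover there exists `p₀ = p₀(a,η)`
such that for all `p > p₀` the set `{z : |R_p z| ≥ 1}` (with the pole `p` included)
contains the real interval `[p, p + a p^(1-η)/2]`. -/
theorem counterexample_real_slice
    (a η : ℝ) (ha : 0 < a) (hη : η ∈ Set.Ioo (2/3 : ℝ) 1) :
    (∀ p : ℝ, 1 < p → ∀ t : ℝ, 0 < t →
      (Rpfun a η p ((p : ℂ) + (p : ℂ) * (t : ℂ))).im = 0 ∧
      (1 ≤ (Rpfun a η p ((p : ℂ) + (p : ℂ) * (t : ℂ))).re ↔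
        p * t ^ 3 + (2 * p ^ η - a) * t ^ 2 + 2 * (p ^ η - a) * t ≤ 2 * a)) ∧
    ∃ p₀ : ℝ, 1 ≤ p₀ ∧ ∀ p : ℝ, p₀ < p →
      ∀ x : ℝ, x ∈ Set.Icc p (p + a * p ^ (1 - η) / 2) →
        (x : ℂ) ∈ lemniscate (aVec a η p) (pVec p) 1 := by
  constructor
  · intro p hp1 t ht
    have hp0 : (0:ℝ) < p := by linarith
    rw [Rpfun_val' a η p t hp0 ht]
    refine ⟨Complex.ofReal_im _, ?_⟩
    rw [Complex.ofReal_re]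
    exact cubic_iff' a η p t hp0 ht
  · have hηpos : 0 < η := by linarith [hη.1]
    have h3η : 0 < 3*η - 1 := by linarith [hη.1]
    have htend : Tendsto (fun p:ℝ => a^3 * p^(1-3*η)/8 + a^2 * p^(-η)/2) atTop (𝓝 0) := by
      have t1 : Tendsto (fun p:ℝ => p^(1-3*η)) atTop (𝓝 (0:ℝ)) := by
        have h := tendsto_rpow_neg_atTop h3η
        simpa [show -(3*η-1) = 1-3*η by ring] using h
      have t2 : Tendsto (fun p:ℝ => p^(-η)) atTop (𝓝 (0:ℝ)) := tendsto_rpow_neg_atTop hηpos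
      have h := ((t1.const_mul (a^3)).div_const 8).add ((t2.const_mul (a^2)).div_const 2)
      simpa using h
    have hev : ∀ᶠ p in atTop, a^3 * p^(1-3*η)/8 + a^2 * p^(-η)/2 < a :=
      htend.eventually_lt_const ha
    obtain ⟨N, hN⟩ := eventually_atTop.1 hev
    refine ⟨max 1 N, le_max_left _ _, ?_⟩
    intro p hpp x hx
    have hp1 : 1 < p := lt_of_le_of_lt (le_max_left 1 N) hpp
    have hp0 : 0 < p := by linarith
    have hu : 0 < p^η := Real.rpow_pos_of_pos hp0 η
    have hv : 0 < p^(-η) := Real.rpow_pos_of_pos hp0 (-η)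
    have huv : p^η * p^(-η) = 1 := by
      rw [← Real.rpow_add hp0]; simp
    have hid : p^(1-3*η) = p * (p^(-η))^3 := by
      rw [show (1:ℝ)-3*η = 1 + (-η)*3 by ring, Real.rpow_add hp0, Real.rpow_one,
        Real.rpow_mul hp0.le]
      rw [show ((3:ℝ)) = ((3:ℕ):ℝ) by norm_num, Real.rpow_natCast]
    have hbound : a^3*(p*(p^(-η))^3)/8 + a^2*(p^(-η))/2 < a := by
      have h := hN p ((le_max_right 1 N).trans hpp.le)
      rw [hid] at h; exact h
    rcases eq_or_lt_of_le hx.1 with hxp | hxp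
    · left
      exact ⟨0, by simp [pVec, hxp]⟩
    · set t : ℝ := (x - p)/p with htdef
      have ht : 0 < t := div_pos (by linarith) hp0
      have htle : t ≤ a * p^(-η)/2 := by
        have h1 : x - p ≤ a * p^(1-η)/2 := by linarith [hx.2]
        have h2 : p^(1-η) = p * p^(-η) := by
          rw [show (1:ℝ)-η = 1 + (-η) by ring, Real.rpow_add hp0, Real.rpow_one]
        rw [h2] at h1
        rw [htdef, div_le_iff₀ hp0]
        nlinarith [hv]
      have hc3 : t^3 ≤ (a*p^(-η)/2)^3 := pow_le_pow_left₀ ht.le htle 3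
      have hc2 : t^2 ≤ (a*p^(-η)/2)^2 := pow_le_pow_left₀ ht.le htle 2
      have b1 : p*t^3 ≤ a^3*(p*(p^(-η))^3)/8 := by
        nlinarith [mul_le_mul_of_nonneg_left hc3 hp0.le]
      have b2 : (2*p^η - a)*t^2 ≤ a^2*(p^(-η))/2 := by
        have h2u : 2*p^η*t^2 ≤ 2*p^η*(a*p^(-η)/2)^2 :=
          mul_le_mul_of_nonneg_left hc2 (by positivity)
        have heq : 2*p^η*(a*p^(-η)/2)^2 = a^2*(p^(-η))/2 := by
          linear_combination (a^2*p^(-η)/2) * huv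
        nlinarith [sq_nonneg t]
      have b3 : 2*(p^η - a)*t ≤ a := by
        have h2u : 2*p^η*t ≤ 2*p^η*(a*p^(-η)/2) :=
          mul_le_mul_of_nonneg_left htle (by positivity)
        have heq : 2*p^η*(a*p^(-η)/2) = a := by
          linear_combination a * huv
        nlinarith [mul_pos ha ht]
      have key : p*t^3 + (2*p^η - a)*t^2 + 2*(p^η - a)*t ≤ 2*a := by linarith
      right
      have hxeq : (x:ℂ) = (p:ℂ) + (p:ℂ)*(t:ℂ) := by
        have hpC : (p:ℂ) ≠ 0 := by exact_mod_cast hp0.ne'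
        rw [htdef]; push_cast
        field_simp
        ring
      rw [ratSum_eq', hxeq, Rpfun_val' a η p t hp0 ht, Complex.norm_real, Real.norm_eq_abs]
      have h1r : 1 ≤ a/(p*t) + 2*(p - p^η)*(1+t)/(p*((1+t)^2+1)) :=
        (cubic_iff' a η p t hp0 ht).2 key
      exact le_trans h1r (le_abs_self _)
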